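/- Degenerate superadditivity of h(r) = r√(2+r²): there are absolute constants 0 < c ≤ C such that for all r, s > 0, c · r s (r+s) / (√(2+r²) + √(2+s²)) ≤ h(r+s) − h(r) − h(s) ≤ C · r s (r+s) / (√(2+r²) + √(2+s²)). -/
import Mathlib


noncomputable section

/-- The radial profile `h(r) = r√(2+r²)` of the symbol `H(ξ) = |ξ|√(2+|ξ|²)` of the
operator `H = √(-Δ(2-Δ))` linearizing the Gross-Pitaevskii equation. -/
def hrad (r : ℝ) : ℝ := r * Real.sqrt (2 + r ^ 2)

/-- Degenerate superadditivity of `h(r) = r√(2+r²)`: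
`h(r+s) - h(r) - h(s) ≍ rs(r+s)/(√(2+r²)+√(2+s²))` for `r, s > 0`. -/
theorem hrad_superadditivity :
    ∃ c C : ℝ, 0 < c ∧ c ≤ C ∧ ∀ r s : ℝ, 0 < r → 0 < s →
      c * (r * s * (r + s) / (Real.sqrt (2 + r ^ 2) + Real.sqrt (2 + s ^ 2)))
          ≤ hrad (r + s) - hrad r - hrad s ∧
      hrad (r + s) - hrad r - hrad s
          ≤ C * (r * s * (r + s) / (Real.sqrt (2 + r ^ 2) + Real.sqrt (2 + s ^ 2))) := by
  refine ⟨1, 3, one_pos, by norm_num, fun r s hr hs => ?_⟩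
  have h2r : (0:ℝ) < 2 + r ^ 2 := by positivity
  have h2s : (0:ℝ) < 2 + s ^ 2 := by positivity
  have h2t : (0:ℝ) < 2 + (r + s) ^ 2 := by positivity
  set a := Real.sqrt (2 + r ^ 2) with ha
  set b := Real.sqrt (2 + s ^ 2) with hb
  set u := Real.sqrt (2 + (r + s) ^ 2) with hu
  have ha2 : a ^ 2 = 2 + r ^ 2 := Real.sq_sqrt h2r.le
  have hb2 : b ^ 2 = 2 + s ^ 2 := Real.sq_sqrt h2s.le
  have hu2 : u ^ 2 = 2 + (r + s) ^ 2 := Real.sq_sqrt h2t.le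
  have hapos : 0 < a := Real.sqrt_pos.2 h2r
  have hbpos : 0 < b := Real.sqrt_pos.2 h2s
  have hupos : 0 < u := Real.sqrt_pos.2 h2t
  have hau : a ≤ u := by
    rw [ha, hu]; exact Real.sqrt_le_sqrt (by nlinarith)
  have hbu : b ≤ u := by
    rw [hb, hu]; exact Real.sqrt_le_sqrt (by nlinarith)
  have hra : r ≤ a := by nlinarith [ha2, hapos, hr]
  have hsb : s ≤ b := by nlinarith [hb2, hbpos, hs]
  have hrsab : r * s ≤ a * b := mul_le_mul hra hsb hs.le hapos.le
  have huab : u ≤ a + b := by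
    have h1 : 2 + (r + s) ^ 2 ≤ (a + b) ^ 2 := by nlinarith [ha2, hb2, hrsab]
    calc u ≤ Real.sqrt ((a + b) ^ 2) := by rw [hu]; exact Real.sqrt_le_sqrt h1
      _ = a + b := Real.sqrt_sq (by positivity)
  have habpos : 0 < a + b := by positivity
  have huapos : 0 < u + a := by positivity
  have hubpos : 0 < u + b := by positivity
  -- key identity
  have hD : hrad (r + s) - hrad r - hrad s
      = r * s * (2 * r + s) / (u + a) + r * s * (r + 2 * s) / (u + b) := by
    have e1 : u - a = s * (2 * r + s) / (u + a) := by
      rw [eq_div_iff huapos.ne']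
      linear_combination hu2 - ha2
    have e2 : u - b = r * (r + 2 * s) / (u + b) := by
      rw [eq_div_iff hubpos.ne']
      linear_combination hu2 - hb2
    have e0 : hrad (r + s) - hrad r - hrad s = r * (u - a) + s * (u - b) := by
      simp only [hrad, ← ha, ← hb, ← hu]; ring
    rw [e0, e1, e2]; ring
  constructor
  · -- lower bound
    rw [hD]
    have h1 : r * s * (2 * r + s) / (2 * (a + b)) ≤ r * s * (2 * r + s) / (u + a) :=
      div_le_div_of_nonneg_left (by positivity) huapos (by linarith)
    have h2 : r * s * (r + 2 * s) / (2 * (a + b)) ≤ r * s * (r + 2 * s) / (u + b) :=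
      div_le_div_of_nonneg_left (by positivity) hubpos (by linarith)
    have hsum : r * s * (2 * r + s) / (2 * (a + b)) + r * s * (r + 2 * s) / (2 * (a + b))
        = (3 / 2) * (r * s * (r + s) / (a + b)) := by
      field_simp; ring
    have hX : 0 ≤ r * s * (r + s) / (a + b) := by positivity
    nlinarith [h1, h2, hsum, hX]
  · -- upper bound
    rw [hD]
    have h1 : r * s * (2 * r + s) / (u + a) ≤ r * s * (2 * r + s) / (a + b) :=
      div_le_div_of_nonneg_left (by positivity) habpos (by linarith)
    have h2 : r * s * (r + 2 * s) / (u + b) ≤ r * s * (r + 2 * s) / (a + b) :=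
      div_le_div_of_nonneg_left (by positivity) habpos (by linarith)
    have hsum : r * s * (2 * r + s) / (a + b) + r * s * (r + 2 * s) / (a + b)
        = 3 * (r * s * (r + s) / (a + b)) := by
      field_simp; ring
    linarith [h1, h2]
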